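/- Let (δ_{11,k})_{k≥1} and (δ_{12,k})_{k≥1} be complex sequences with ∑_k |δ_{11,k}| < ∞ and ∑_k |δ_{12,k}| < ∞, and let M_k be the 2×2 complex matrix with rows (1 + δ_{11,k}, δ_{12,k}) and (1, 0). Then: (1) for every k ≥ 1 the infinite product R_k = M_k M_{k+1} ⋯ exists; (2) the second column of each limit matrix R_k is zero; (3) if moreover δ_{12,k} ≠ 0 for all k, then every R_k has rank exactly 1, and its kernel is spanned by the vector (0, 1). -/

import Mathlib

open Filter Topology Matrix

def opProd {A : Type*} [Mul A] (M : ℕ → A) (k : ℕ) : ℕ → A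
  | 0 => M k
  | n + 1 => opProd M k n * M (k + n + 1)

namespace InfProdAux

noncomputable section

variable (d11 d12 : ℕ → ℂ)

/-- The state recursion for the two entries of a fixed row of the partial products. -/
def u (k : ℕ) (v0 : ℂ × ℂ) : ℕ → ℂ × ℂ
  | 0 => v0
  | n + 1 => ((1 + d11 (k + 1 + n)) * (u k v0 n).1 + (u k v0 n).2,
              d12 (k + 1 + n) * (u k v0 n).1)

def g (j : ℕ) : ℝ := ‖d11 j‖ + ‖d12 j‖

def T (m : ℕ) : ℝ := ∑' j, g d11 d12 (j + m)

def K (k : ℕ) (v0 : ℂ × ℂ) : ℝ := (‖v0.1‖ + ‖v0.2‖ + 1) * Real.exp (T d11 d12 (k + 1))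

variable {d11 d12}

lemma g_nonneg (j : ℕ) : 0 ≤ g d11 d12 j := add_nonneg (norm_nonneg _) (norm_nonneg _)

lemma summable_shift {f : ℕ → ℝ} (hf : Summable f) (m : ℕ) :
    Summable fun n => f (m + n) := by
  simpa [add_comm m] using (summable_nat_add_iff m).2 hf

lemma T_nonneg (m : ℕ) : 0 ≤ T d11 d12 m :=
  tsum_nonneg fun _ => g_nonneg _

lemma sum_le_T (hg : Summable (g d11 d12)) (m n : ℕ) :
    ∑ j ∈ Finset.range n, g d11 d12 (m + j) ≤ T d11 d12 m := by
  have h1 : ∑ j ∈ Finset.range n, g d11 d12 (m + j)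
      = ∑ j ∈ Finset.range n, g d11 d12 (j + m) :=
    Finset.sum_congr rfl fun j _ => by rw [add_comm]
  rw [h1]
  exact Summable.sum_le_tsum _ (fun _ _ => g_nonneg _) ((summable_nat_add_iff m).2 hg)

lemma one_le_K (k : ℕ) (v0 : ℂ × ℂ) : 1 ≤ K d11 d12 k v0 := by
  have h1 : (1 : ℝ) ≤ ‖v0.1‖ + ‖v0.2‖ + 1 := by
    have := norm_nonneg v0.1; have := norm_nonneg v0.2; linarith
  have h2 : (1 : ℝ) ≤ Real.exp (T d11 d12 (k + 1)) :=
    Real.one_le_exp (T_nonneg _)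
  calc (1:ℝ) = 1 * 1 := by ring
  _ ≤ _ := mul_le_mul h1 h2 zero_le_one (by linarith)

lemma u_bound (hg : Summable (g d11 d12)) (k : ℕ) (v0 : ℂ × ℂ) : ∀ n,
    ‖(u d11 d12 k v0 n).1‖ + ‖(u d11 d12 k v0 n).2‖ ≤
      (‖v0.1‖ + ‖v0.2‖) * Real.exp (∑ j ∈ Finset.range n, g d11 d12 (k + 1 + j)) := by
  intro n
  induction n with
  | zero => simp [u]
  | succ n ih =>
    set a := (u d11 d12 k v0 n).1
    set b := (u d11 d12 k v0 n).2
    have h1 : ‖(1 + d11 (k + 1 + n)) * a + b‖ ≤ (1 + ‖d11 (k + 1 + n)‖) * ‖a‖ + ‖b‖ := by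
      calc ‖(1 + d11 (k + 1 + n)) * a + b‖ ≤ ‖(1 + d11 (k + 1 + n)) * a‖ + ‖b‖ := norm_add_le _ _
      _ ≤ (1 + ‖d11 (k + 1 + n)‖) * ‖a‖ + ‖b‖ := by
          rw [norm_mul]
          have : ‖(1 : ℂ) + d11 (k + 1 + n)‖ ≤ 1 + ‖d11 (k + 1 + n)‖ := by
            simpa using norm_add_le (1 : ℂ) (d11 (k + 1 + n))
          have := norm_nonneg a
          nlinarith
    have h2 : ‖d12 (k + 1 + n) * a‖ = ‖d12 (k + 1 + n)‖ * ‖a‖ := norm_mul _ _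
    have hexp : 1 + g d11 d12 (k + 1 + n) ≤ Real.exp (g d11 d12 (k + 1 + n)) := by
      have := Real.add_one_le_exp (g d11 d12 (k + 1 + n)); linarith
    have hstep : ‖(u d11 d12 k v0 (n+1)).1‖ + ‖(u d11 d12 k v0 (n+1)).2‖ ≤
        (1 + g d11 d12 (k + 1 + n)) * (‖a‖ + ‖b‖) := by
      show ‖(1 + d11 (k + 1 + n)) * a + b‖ + ‖d12 (k + 1 + n) * a‖ ≤ _
      rw [h2]
      have hb := norm_nonneg b
      have ha := norm_nonneg a
      unfold g
      nlinarith [mul_nonneg (norm_nonneg (d11 (k + 1 + n))) hb,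
        mul_nonneg (norm_nonneg (d12 (k + 1 + n))) hb,
        norm_nonneg (d11 (k + 1 + n)), norm_nonneg (d12 (k + 1 + n))]
    rw [Finset.sum_range_succ, Real.exp_add]
    have hS0 : (0:ℝ) ≤ ‖v0.1‖ + ‖v0.2‖ := by positivity
    have hE := Real.exp_pos (∑ j ∈ Finset.range n, g d11 d12 (k + 1 + j))
    have hgn := g_nonneg (d11 := d11) (d12 := d12) (k + 1 + n)
    have hab : (0:ℝ) ≤ ‖a‖ + ‖b‖ := by positivity
    nlinarith [Real.exp_pos (g d11 d12 (k + 1 + n))]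

lemma u_fst_le (hg : Summable (g d11 d12)) (k : ℕ) (v0 : ℂ × ℂ) (n : ℕ) :
    ‖(u d11 d12 k v0 n).1‖ ≤ K d11 d12 k v0 := by
  have h1 := u_bound hg k v0 n
  have h2 : Real.exp (∑ j ∈ Finset.range n, g d11 d12 (k + 1 + j)) ≤
      Real.exp (T d11 d12 (k + 1)) := Real.exp_le_exp.2 (sum_le_T hg (k+1) n)
  have h3 := norm_nonneg (u d11 d12 k v0 n).2
  have h4 : (0:ℝ) ≤ ‖v0.1‖ + ‖v0.2‖ := by positivity
  have h5 := Real.exp_pos (∑ j ∈ Finset.range n, g d11 d12 (k + 1 + j))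
  have h6 := Real.exp_pos (T d11 d12 (k + 1))
  unfold K
  nlinarith

lemma u_snd_le (hg : Summable (g d11 d12)) (k : ℕ) (v0 : ℂ × ℂ)
    (hb0 : ‖v0.2‖ ≤ ‖d12 k‖) (n : ℕ) :
    ‖(u d11 d12 k v0 n).2‖ ≤ K d11 d12 k v0 * ‖d12 (k + n)‖ := by
  cases n with
  | zero =>
    have hK := one_le_K (d11 := d11) (d12 := d12) k v0
    have := norm_nonneg (d12 k)
    show ‖v0.2‖ ≤ K d11 d12 k v0 * ‖d12 (k + 0)‖
    simp only [Nat.add_zero]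
    nlinarith
  | succ n =>
    show ‖d12 (k + 1 + n) * (u d11 d12 k v0 n).1‖ ≤ _
    rw [norm_mul]
    have h1 := u_fst_le hg k v0 n
    have h2 : k + (n + 1) = k + 1 + n := by omega
    rw [h2]
    have := norm_nonneg (d12 (k + 1 + n))
    nlinarith

lemma u_dist (hg : Summable (g d11 d12)) (k : ℕ) (v0 : ℂ × ℂ)
    (hb0 : ‖v0.2‖ ≤ ‖d12 k‖) (n : ℕ) :
    dist ((u d11 d12 k v0 n).1) ((u d11 d12 k v0 (n+1)).1) ≤
      K d11 d12 k v0 * (‖d11 (k + 1 + n)‖ + ‖d12 (k + n)‖) := by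
  have h1 := u_fst_le hg k v0 n
  have h2 := u_snd_le hg k v0 hb0 n
  set a := (u d11 d12 k v0 n).1
  set b := (u d11 d12 k v0 n).2
  have h3 : (u d11 d12 k v0 (n+1)).1 = (1 + d11 (k + 1 + n)) * a + b := rfl
  rw [h3, dist_eq_norm]
  have h4 : a - ((1 + d11 (k + 1 + n)) * a + b) = -(d11 (k + 1 + n) * a + b) := by ring
  rw [h4, norm_neg]
  calc ‖d11 (k + 1 + n) * a + b‖ ≤ ‖d11 (k + 1 + n)‖ * ‖a‖ + ‖b‖ := by
        simpa [norm_mul] using norm_add_le (d11 (k + 1 + n) * a) b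
  _ ≤ K d11 d12 k v0 * (‖d11 (k + 1 + n)‖ + ‖d12 (k + n)‖) := by
      have := norm_nonneg (d11 (k + 1 + n))
      nlinarith

lemma hsum (h11 : Summable fun j => ‖d11 j‖) (h12 : Summable fun j => ‖d12 j‖)
    (k : ℕ) (v0 : ℂ × ℂ) :
    Summable fun n => K d11 d12 k v0 * (‖d11 (k + 1 + n)‖ + ‖d12 (k + n)‖) :=
  ((summable_shift h11 (k+1)).add (summable_shift h12 k)).mul_left _

lemma u_fst_cauchy (h11 : Summable fun j => ‖d11 j‖) (h12 : Summable fun j => ‖d12 j‖)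
    (k : ℕ) (v0 : ℂ × ℂ) (hb0 : ‖v0.2‖ ≤ ‖d12 k‖) :
    CauchySeq fun n => (u d11 d12 k v0 n).1 :=
  cauchySeq_of_dist_le_of_summable _ (u_dist (h11.add h12) k v0 hb0) (hsum h11 h12 k v0)

lemma u_snd_tendsto (h11 : Summable fun j => ‖d11 j‖) (h12 : Summable fun j => ‖d12 j‖)
    (k : ℕ) (v0 : ℂ × ℂ) (hb0 : ‖v0.2‖ ≤ ‖d12 k‖) :
    Tendsto (fun n => (u d11 d12 k v0 n).2) atTop (𝓝 0) := by
  apply squeeze_zero_norm (u_snd_le (h11.add h12) k v0 hb0)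
  have h1 : Tendsto (fun n => ‖d12 (k + n)‖) atTop (𝓝 0) :=
    (summable_shift h12 k).tendsto_atTop_zero
  simpa using h1.const_mul (K d11 d12 k v0)

lemma T_succ_le (hg : Summable (g d11 d12)) (m : ℕ) :
    T d11 d12 (m + 1) ≤ T d11 d12 m := by
  have hsm : Summable fun j => g d11 d12 (j + m) := (summable_nat_add_iff m).2 hg
  have h1 : T d11 d12 m = g d11 d12 m + ∑' j, g d11 d12 (j + 1 + m) := by
    have h0 : T d11 d12 m = g d11 d12 (0 + m) + ∑' j, g d11 d12 (j + 1 + m) :=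
      Summable.tsum_eq_zero_add hsm
    rwa [Nat.zero_add] at h0
  have h2 : T d11 d12 (m + 1) = ∑' j, g d11 d12 (j + 1 + m) := by
    apply tsum_congr; intro j; congr 1; omega
  rw [h2, h1]
  have := g_nonneg (d11 := d11) (d12 := d12) m
  linarith

lemma lim_ne (h11 : Summable fun j => ‖d11 j‖) (h12 : Summable fun j => ‖d12 j‖)
    (k : ℕ) {L : ℂ}
    (hL : Tendsto (fun n => (u d11 d12 k (1, 0) n).1) atTop (𝓝 L))
    (hT : T d11 d12 k < 1 / 16) : L ≠ 0 := by
  have hg : Summable (g d11 d12) := h11.add h12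
  have hb0 : ‖((1:ℂ), (0:ℂ)).2‖ ≤ ‖d12 k‖ := by simp
  have hd := dist_le_tsum_of_dist_le_of_tendsto₀ _ (u_dist hg k (1, 0) hb0)
    (hsum h11 h12 k (1, 0)) hL
  have h0 : (u d11 d12 k (1, 0) 0).1 = 1 := rfl
  rw [h0] at hd
  set Kk := K d11 d12 k ((1:ℂ), (0:ℂ)) with hKk
  have hKnn : (0:ℝ) ≤ Kk := le_trans zero_le_one (one_le_K k _)
  have htsum : ∑' n, Kk * (‖d11 (k + 1 + n)‖ + ‖d12 (k + n)‖)
      = Kk * ((∑' n, ‖d11 (k + 1 + n)‖) + ∑' n, ‖d12 (k + n)‖) := by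
    rw [← Summable.tsum_add (summable_shift h11 (k+1)) (summable_shift h12 k), tsum_mul_left]
  have hA : (∑' n, ‖d11 (k + 1 + n)‖) ≤ T d11 d12 k := by
    have h1 : (∑' n, ‖d11 (k + 1 + n)‖) ≤ T d11 d12 (k + 1) := by
      apply Summable.tsum_le_tsum _ (summable_shift h11 (k+1)) ((summable_nat_add_iff (k+1)).2 hg)
      intro n
      have h2 : k + 1 + n = n + (k + 1) := by omega
      rw [h2]
      exact le_add_of_nonneg_right (norm_nonneg _)
    exact le_trans h1 (T_succ_le hg k)
  have hB : (∑' n, ‖d12 (k + n)‖) ≤ T d11 d12 k := by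
    apply Summable.tsum_le_tsum _ (summable_shift h12 k) ((summable_nat_add_iff k).2 hg)
    intro n
    have h2 : k + n = n + k := by omega
    rw [h2]
    exact le_add_of_nonneg_left (norm_nonneg _)
  have hKle : Kk ≤ 2 * Real.exp (T d11 d12 k) := by
    rw [hKk]
    unfold K
    have h1 : ‖((1:ℂ), (0:ℂ)).1‖ + ‖((1:ℂ), (0:ℂ)).2‖ + 1 = 2 := by norm_num
    rw [h1]
    have := Real.exp_le_exp.2 (T_succ_le hg k)
    linarith
  have hTnn := T_nonneg (d11 := d11) (d12 := d12) k
  have hexp : Real.exp (T d11 d12 k) ≤ Real.exp 1 :=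
    Real.exp_le_exp.2 (by linarith)
  have he1 : Real.exp 1 < 3 := by
    have := Real.exp_one_lt_d9; linarith
  have hd2 : dist (1:ℂ) L < 1 := by
    have hAB : (∑' n, ‖d11 (k + 1 + n)‖) + (∑' n, ‖d12 (k + n)‖) ≤ 2 * T d11 d12 k := by
      linarith
    have hABnn : (0:ℝ) ≤ (∑' n, ‖d11 (k + 1 + n)‖) + (∑' n, ‖d12 (k + n)‖) := by
      have : (0:ℝ) ≤ ∑' n, ‖d11 (k + 1 + n)‖ := tsum_nonneg (fun n => norm_nonneg (d11 (k + 1 + n)))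
      have : (0:ℝ) ≤ ∑' n, ‖d12 (k + n)‖ := tsum_nonneg (fun n => norm_nonneg (d12 (k + n)))
      linarith
    rw [htsum] at hd
    have hEpos := Real.exp_pos (T d11 d12 k)
    nlinarith
  intro hL0
  rw [hL0] at hd2
  norm_num [dist_zero_right] at hd2

end

end InfProdAux
theorem inf_product_two_by_two
    (d11 d12 : ℕ → ℂ)
    (h11 : Summable fun k => ‖d11 k‖)
    (h12 : Summable fun k => ‖d12 k‖)
    (M : ℕ → Matrix (Fin 2) (Fin 2) ℂ)
    (hM : ∀ k, M k = !![1 + d11 k, d12 k; 1, 0]) :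
    ∃ R : ℕ → Matrix (Fin 2) (Fin 2) ℂ,
      (∀ k, Tendsto (fun m => opProd M k m) atTop (nhds (R k))) ∧
      (∀ k, R k 0 1 = 0 ∧ R k 1 1 = 0) ∧
      ((∀ k, d12 k ≠ 0) → ∀ k,
        (R k).rank = 1 ∧
        ∀ v : Fin 2 → ℂ, (R k).mulVec v = 0 ↔ ∃ c : ℂ, v = c • ![0, 1]) := by
  classical
  have hg : Summable (InfProdAux.g d11 d12) := h11.add h12
  -- the entries of the partial products satisfy the recursion `u`
  have entry : ∀ k (i : Fin 2) (n : ℕ),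
      opProd M k n i 0 = (InfProdAux.u d11 d12 k (M k i 0, M k i 1) n).1 ∧
      opProd M k n i 1 = (InfProdAux.u d11 d12 k (M k i 0, M k i 1) n).2 := by
    intro k i n
    induction n with
    | zero => exact ⟨rfl, rfl⟩
    | succ n ih =>
      obtain ⟨ih1, ih2⟩ := ih
      have hidx : k + n + 1 = k + 1 + n := by omega
      constructor
      · show (opProd M k n * M (k + n + 1)) i 0 = _
        rw [Matrix.mul_apply, Fin.sum_univ_two, ih1, ih2, hidx, hM (k + 1 + n)]
        show _ = (1 + d11 (k + 1 + n)) * _ + _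
        norm_num
        ring
      · show (opProd M k n * M (k + n + 1)) i 1 = _
        rw [Matrix.mul_apply, Fin.sum_univ_two, ih1, ih2, hidx, hM (k + 1 + n)]
        show _ = d12 (k + 1 + n) * _
        norm_num
        ring
  have hb0 : ∀ k (i : Fin 2), ‖((M k i 0, M k i 1)).2‖ ≤ ‖d12 k‖ := by
    intro k i
    fin_cases i <;> simp [hM k]
  have hEx : ∀ k (i : Fin 2), ∃ L : ℂ,
      Tendsto (fun n => (InfProdAux.u d11 d12 k (M k i 0, M k i 1) n).1) atTop (𝓝 L) :=
    fun k i => cauchySeq_tendsto_of_complete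
      (InfProdAux.u_fst_cauchy h11 h12 k _ (hb0 k i))
  choose L hL using hEx
  set R : ℕ → Matrix (Fin 2) (Fin 2) ℂ := fun k => !![L k 0, 0; L k 1, 0] with hRdef
  have hR0 : ∀ k (i : Fin 2), R k i 0 = L k i := by
    intro k i; fin_cases i <;> simp [hRdef]
  have hR1 : ∀ k (i : Fin 2), R k i 1 = 0 := by
    intro k i; fin_cases i <;> simp [hRdef]
  -- convergence
  have htend : ∀ k, Tendsto (fun m => opProd M k m) atTop (𝓝 (R k)) := by
    intro k
    refine tendsto_pi_nhds.2 ?_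
    intro i
    rw [tendsto_pi_nhds]
    intro j
    fin_cases j
    · show Tendsto (fun m => opProd M k m i 0) atTop (𝓝 (R k i 0))
      rw [hR0 k i]
      exact (hL k i).congr fun n => ((entry k i n).1).symm
    · show Tendsto (fun m => opProd M k m i 1) atTop (𝓝 (R k i 1))
      rw [hR1 k i]
      exact (InfProdAux.u_snd_tendsto h11 h12 k _ (hb0 k i)).congr
        fun n => ((entry k i n).2).symm
  -- splitting of the partial products
  have hsplit : ∀ k N n, opProd M k (N + 1 + n) = opProd M k N * opProd M (k + N + 1) n := by
    intro k N n
    induction n with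
    | zero => rfl
    | succ n ih =>
      have hidx : k + (N + 1 + n) + 1 = k + N + 1 + n + 1 := by omega
      show opProd M k (N + 1 + n) * M (k + (N + 1 + n) + 1) = _
      rw [ih, hidx, mul_assoc]
      rfl
  have hRsplit : ∀ k N, R k = opProd M k N * R (k + N + 1) := by
    intro k N
    have t1 : Tendsto (fun n => opProd M k (N + 1 + n)) atTop (𝓝 (R k)) := by
      have h := (htend k).comp (tendsto_add_atTop_nat (N + 1))
      exact h.congr fun n => by simp [Function.comp, add_comm]
    have hCont : Continuous fun X : Matrix (Fin 2) (Fin 2) ℂ => opProd M k N * X :=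
      continuous_const.matrix_mul continuous_id
    have t2 : Tendsto (fun n => opProd M k N * opProd M (k + N + 1) n) atTop
        (𝓝 (opProd M k N * R (k + N + 1))) :=
      (hCont.tendsto _).comp (htend (k + N + 1))
    exact tendsto_nhds_unique (t1.congr fun n => hsplit k N n) t2
  refine ⟨R, htend, fun k => ⟨hR1 k 0, hR1 k 1⟩, ?_⟩
  intro hne k
  -- determinants
  have hdetM : ∀ j, (M j).det ≠ 0 := by
    intro j
    rw [hM j, Matrix.det_fin_two_of]
    have h : (1 + d11 j) * 0 - d12 j * 1 = -(d12 j) := by ring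
    rw [h]
    exact neg_ne_zero.2 (hne j)
  have hdetP : ∀ k n, (opProd M k n).det ≠ 0 := by
    intro k n
    induction n with
    | zero => exact hdetM k
    | succ n ih =>
      show ((opProd M k n) * M (k + n + 1)).det ≠ 0
      rw [Matrix.det_mul]
      exact mul_ne_zero ih (hdetM _)
  -- choose a far enough index with a small tail
  have hTev : ∀ᶠ m in atTop, InfProdAux.T d11 d12 m < 1 / 16 :=
    (tendsto_sum_nat_add (InfProdAux.g d11 d12)).eventually
      (gt_mem_nhds (by norm_num : (0:ℝ) < 1 / 16))
  obtain ⟨N₀, hN₀⟩ := eventually_atTop.1 hTev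
  set m := max (k + 1) N₀ with hmdef
  set N := m - (k + 1) with hNdef
  have hm : k + N + 1 = m := by
    have : k + 1 ≤ m := le_max_left _ _
    omega
  -- L m 1 ≠ 0
  have hinit : ((M m 1 0 : ℂ), (M m 1 1 : ℂ)) = ((1 : ℂ), (0 : ℂ)) := by
    rw [hM m]; simp
  have hLm : Tendsto (fun n => (InfProdAux.u d11 d12 m ((1:ℂ), (0:ℂ)) n).1) atTop
      (𝓝 (L m 1)) := by
    have := hL m 1
    rwa [hinit] at this
  have hLmne : L m 1 ≠ 0 :=
    InfProdAux.lim_ne h11 h12 m hLm (hN₀ m (le_max_right _ _))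
  -- the first column of R k is nonzero
  have hcne : (fun i => R m i 0) ≠ 0 := by
    intro h
    have := congrFun h 1
    rw [hR0 m 1] at this
    exact hLmne this
  have hRk : R k = opProd M k N * R m := by
    have := hRsplit k N
    rwa [hm] at this
  have hmulvec : (fun i => R k i 0) = (opProd M k N).mulVec (fun i => R m i 0) := by
    funext i
    rw [hRk]
    simp [Matrix.mul_apply, Matrix.mulVec, dotProduct]
  have hinj : Function.Injective (opProd M k N).mulVec :=
    Matrix.mulVec_injective_iff_isUnit.2
      ((Matrix.isUnit_iff_isUnit_det _).2 (isUnit_iff_ne_zero.2 (hdetP k N)))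
  have hc0 : (fun i => R k i 0) ≠ 0 := by
    intro h
    apply hcne
    apply hinj
    rw [← hmulvec, h, Matrix.mulVec_zero]
  -- mulVec formula
  have hmv : ∀ v : Fin 2 → ℂ, (R k).mulVec v = v 0 • fun i => R k i 0 := by
    intro v
    funext i
    simp [Matrix.mulVec, dotProduct, Fin.sum_univ_two, hR1 k i]
    ring
  constructor
  · -- rank
    have hrange : LinearMap.range (R k).mulVecLin = Submodule.span ℂ {fun i => R k i 0} := by
      apply le_antisymm
      · rintro x ⟨v, rfl⟩
        rw [Matrix.mulVecLin_apply, hmv v]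
        exact Submodule.smul_mem _ _ (Submodule.mem_span_singleton_self _)
      · rw [Submodule.span_le, Set.singleton_subset_iff]
        refine ⟨![1, 0], ?_⟩
        rw [Matrix.mulVecLin_apply, hmv]
        simp
    rw [Matrix.rank, hrange, finrank_span_singleton hc0]
  · -- kernel
    intro v
    constructor
    · intro h
      rw [hmv v] at h
      have hv0 : v 0 = 0 := by
        rcases smul_eq_zero.1 h with h' | h'
        · exact h'
        · exact absurd h' hc0
      refine ⟨v 1, ?_⟩
      funext i
      fin_cases i <;> simp [hv0]
    · rintro ⟨c, rfl⟩
      rw [hmv]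
      simp
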